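/- Let 0 < n < 1 and let δ̃ > 0. Define B_U(n) = P(n/(1+nδ̃)) − n²·P(1/(1+nδ̃)) where P(x) = arccos(x) − x√(1−x²). Then B_U(n) ≥ arccos(n) − n√(1−n²), i.e. the upper-bound constant dominates the lower-bound constant. -/

import Mathlib

open Real Set

lemma q_hasDeriv (x : ℝ) (hx1 : -1 < x) (hx2 : x < 1) :
    HasDerivAt (fun y : ℝ => Real.arccos y - y * Real.sqrt (1 - y ^ 2))
      (-2 * Real.sqrt (1 - x ^ 2)) x := by
  have hs : 0 < 1 - x ^ 2 := by nlinarith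
  set s := Real.sqrt (1 - x ^ 2) with hsdef
  have hsq : 0 < s := Real.sqrt_pos.mpr hs
  have hss : s ^ 2 = 1 - x ^ 2 := Real.sq_sqrt hs.le
  have h1 : HasDerivAt Real.arccos (-(1 / Real.sqrt (1 - x ^ 2))) x :=
    Real.hasDerivAt_arccos (by linarith) (by linarith)
  have hinner : HasDerivAt (fun y : ℝ => 1 - y ^ 2) (-(2 * x)) x := by
    simpa using ((hasDerivAt_pow 2 x).const_sub 1)
  have h2 : HasDerivAt (fun y : ℝ => Real.sqrt (1 - y ^ 2))
      (1 / (2 * s) * -(2 * x)) x :=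
    (Real.hasDerivAt_sqrt (ne_of_gt hs)).comp x hinner
  have h3 : HasDerivAt (fun y : ℝ => y * Real.sqrt (1 - y ^ 2))
      (1 * s + x * (1 / (2 * s) * -(2 * x))) x :=
    (hasDerivAt_id x).mul h2
  have := h1.sub h3
  refine this.congr_deriv ?_
  rw [← hsdef]
  field_simp [hsq.ne']
  nlinarith [hss]

lemma q_cont : Continuous (fun y : ℝ => Real.arccos y - y * Real.sqrt (1 - y ^ 2)) := by
  continuity

theorem stmt_16 (n δ : ℝ) (hn0 : 0 < n) (hn1 : n < 1) (hδ : 0 < δ)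
    (P : ℝ → ℝ) (hP : ∀ x, P x = Real.arccos x - x * Real.sqrt (1 - x ^ 2)) :
    P (n / (1 + n * δ)) - n ^ 2 * P (1 / (1 + n * δ)) ≥
      Real.arccos n - n * Real.sqrt (1 - n ^ 2) := by
  set q : ℝ → ℝ := fun y => Real.arccos y - y * Real.sqrt (1 - y ^ 2) with hq
  set g : ℝ → ℝ := fun y => q (n * y) - n ^ 2 * q y with hg
  have hd : 0 < 1 + n * δ := by nlinarith
  set t : ℝ := 1 / (1 + n * δ) with ht
  have ht0 : 0 < t := by positivity
  have ht1 : t < 1 := by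
    rw [ht, div_lt_one hd]; nlinarith
  -- g is antitone on [t, 1]
  have hder : ∀ x ∈ Ioo t 1, HasDerivAt g (-2 * Real.sqrt (1 - (n * x) ^ 2) * (n * 1)
      - n ^ 2 * (-2 * Real.sqrt (1 - x ^ 2))) x := by
    intro x hx
    have hx0 : 0 < x := lt_trans ht0 hx.1
    have hx1 : x < 1 := hx.2
    have hnx : -1 < n * x := by nlinarith
    have hnx1 : n * x < 1 := by nlinarith
    have hdq1 := (q_hasDeriv (n * x) hnx hnx1).comp x
      ((hasDerivAt_id x).const_mul n)
    have hdq2 := ((q_hasDeriv x (by linarith) hx1).const_mul (n ^ 2))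
    exact hdq1.sub hdq2
  have hanti : AntitoneOn g (Icc t 1) := by
    apply antitoneOn_of_deriv_nonpos (convex_Icc t 1)
    · exact ((q_cont.comp (continuous_const.mul continuous_id)).sub
        (continuous_const.mul q_cont)).continuousOn
    · intro x hx
      rw [interior_Icc] at hx
      exact (hder x hx).differentiableAt.differentiableWithinAt
    · intro x hx
      rw [interior_Icc] at hx
      have hx0 : 0 < x := lt_trans ht0 hx.1
      have hx1 : x < 1 := hx.2
      rw [(hder x hx).deriv]
      have key : n * Real.sqrt (1 - x ^ 2) ≤ Real.sqrt (1 - (n * x) ^ 2) := by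
        have : n * Real.sqrt (1 - x ^ 2) = Real.sqrt (n ^ 2 * (1 - x ^ 2)) := by
          rw [Real.sqrt_mul (by positivity), Real.sqrt_sq hn0.le]
        rw [this]
        apply Real.sqrt_le_sqrt
        nlinarith
      nlinarith
  have hmem1 : t ∈ Icc t 1 := ⟨le_refl t, ht1.le⟩
  have hmem2 : (1 : ℝ) ∈ Icc t 1 := ⟨ht1.le, le_refl 1⟩
  have := hanti hmem1 hmem2 ht1.le
  have hg1 : g 1 = Real.arccos n - n * Real.sqrt (1 - n ^ 2) := by
    simp only [hg, hq, mul_one]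
    norm_num [Real.arccos_one]
  have hgt : g t = P (n / (1 + n * δ)) - n ^ 2 * P (1 / (1 + n * δ)) := by
    simp only [hg, hq, ht, hP]
    rw [mul_one_div]
  rw [hg1, hgt] at this
  linarith
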